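/- arXiv:1911.03647 — 3 statements merged into one kernel-verified Lean document; each statement's English description precedes it below -/
import Mathlib

section
/- Let H be a Hilbert space, X a closed subspace with orthogonal projection P onto X. Suppose there is a constant C > 0 such that ‖P u − u‖ ≤ C‖Q u‖ for all u, where Q : H → ℂ^g is a bounded linear map. If A : H → K is a bounded linear map into a Hilbert space K, W ⊆ K is a subset with Q₁|_W = 0 for a bounded linear Q₁ : K → ℂ^g satisfying Q = Q₁ ∘ A, and the image A(H) is dense in K, then A(X) is dense in the closure of W in K. -/
open MeasureTheory

/-- Abstract density lemma: if the projection error onto `X` is controlled by `‖Q u‖`,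
`Q = Q₁ ∘ A`, `Q₁` annihilates `W`, and `A` has dense range, then `A(X)` is dense in the
closure of `W`. -/
theorem dense_image_of_projection_estimate
    {H K : Type*} [NormedAddCommGroup H] [InnerProductSpace ℂ H] [CompleteSpace H]
    [NormedAddCommGroup K] [InnerProductSpace ℂ K] [CompleteSpace K]
    (g : ℕ) (X : Submodule ℂ H) (hX : IsClosed (X : Set H)) [CompleteSpace X]
    (C : ℝ) (hC : 0 < C)
    (Q : H →L[ℂ] EuclideanSpace ℂ (Fin g))
    (hPQ : ∀ u : H, ‖(X.orthogonalProjectionOnto u : H) - u‖ ≤ C * ‖Q u‖)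
    (A : H →L[ℂ] K) (W : Set K)
    (Q₁ : K →L[ℂ] EuclideanSpace ℂ (Fin g))
    (hW : ∀ w ∈ W, Q₁ w = 0)
    (hcomp : Q = Q₁.comp A)
    (hA : DenseRange A) :
    closure W ⊆ closure (A '' (X : Set H)) := by
  intro w hw
  rw [Metric.mem_closure_iff]
  intro ε hε
  obtain ⟨w', hw'W, hww'⟩ := Metric.mem_closure_iff.mp hw (ε / 2) (by positivity)
  set M : ℝ := ‖A‖ * (C * ‖Q₁‖) + 1 with hMdef
  have hM : 0 < M := by positivity
  obtain ⟨u, hu⟩ := Metric.denseRange_iff.mp hA w' (ε / 2 / M) (by positivity)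
  have huAu : ‖A u - w'‖ ≤ ε / 2 / M := by
    have := hu.le
    rwa [dist_comm, dist_eq_norm] at this
  have hQu : ‖Q u‖ ≤ ‖Q₁‖ * (ε / 2 / M) := by
    have hq : Q u = Q₁ (A u - w') := by
      rw [hcomp]; simp [map_sub, hW w' hw'W]
    rw [hq]
    calc ‖Q₁ (A u - w')‖ ≤ ‖Q₁‖ * ‖A u - w'‖ := Q₁.le_opNorm _
      _ ≤ ‖Q₁‖ * (ε / 2 / M) := by gcongr
  refine ⟨A (X.orthogonalProjectionOnto u), ⟨_, (X.orthogonalProjectionOnto u).2, rfl⟩, ?_⟩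
  have h1 : ‖A (X.orthogonalProjectionOnto u) - A u‖ ≤ ‖A‖ * (C * (‖Q₁‖ * (ε / 2 / M))) := by
    calc ‖A (X.orthogonalProjectionOnto u) - A u‖
        = ‖A ((X.orthogonalProjectionOnto u : H) - u)‖ := by rw [map_sub]
      _ ≤ ‖A‖ * ‖(X.orthogonalProjectionOnto u : H) - u‖ := A.le_opNorm _
      _ ≤ ‖A‖ * (C * ‖Q u‖) := by gcongr; exact hPQ u
      _ ≤ ‖A‖ * (C * (‖Q₁‖ * (ε / 2 / M))) := by gcongr
  have key : dist w (A (X.orthogonalProjectionOnto u)) < ε := by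
    calc dist w (A (X.orthogonalProjectionOnto u))
        ≤ dist w w' + dist w' (A u) + dist (A u) (A (X.orthogonalProjectionOnto u)) :=
          dist_triangle4 _ _ _ _
      _ < ε / 2 + ε / 2 / M + ‖A‖ * (C * (‖Q₁‖ * (ε / 2 / M))) := by
          have h2 : dist (A u) (A (X.orthogonalProjectionOnto u)) ≤
              ‖A‖ * (C * (‖Q₁‖ * (ε / 2 / M))) := by
            rw [dist_comm, dist_eq_norm]; exact h1
          have h3 : dist w' (A u) < ε / 2 / M := hu
          linarith
      _ = ε / 2 + (1 + ‖A‖ * (C * ‖Q₁‖)) * (ε / 2 / M) := by ring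
      _ = ε / 2 + M * (ε / 2 / M) := by rw [hMdef]; ring_nf
      _ = ε := by field_simp; ring
  exact key
end

section
/- Let Σ = {z ∈ ℂ : r < |z| < 1} for some 0 < r < 1, and fix z₀ with |z₀| > 1. The linear functional on the holomorphic Dirichlet space of Σ given by Λ(h) = the value at z₀ of the Cauchy-type integral (1/2πi)∮_{|w|=ρ} h(w)/(w−z₀) dw (independent of ρ ∈ (r,1)) is bounded with respect to the Dirichlet norm ‖h‖² = |h(p)|² + ∬_Σ |h'|² dA (p a fixed point of Σ), vanishes on restrictions to Σ of functions holomorphic on the unit disk 𝔻 with finite Dirichlet energy, but does not vanish identically on the Dirichlet space of Σ. -/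
open MeasureTheory Metric Complex

namespace AnnulusAux


lemma isOpen_ann (r s : ℝ) : IsOpen {z : ℂ | r < ‖z‖ ∧ ‖z‖ < s} :=
  (isOpen_Ioo (a := r) (b := s)).preimage continuous_norm

noncomputable def LL (z₀ : ℂ) : ℂ → ℂ := fun w => Complex.log (1 - w / z₀)

lemma hasDerivAt_LL {z₀ : ℂ} (hz₀ : 1 < ‖z₀‖) {w : ℂ} (hw : ‖w‖ < 1) :
    HasDerivAt (LL z₀) ((w - z₀)⁻¹) w := by
  have hz₀pos : (0:ℝ) < ‖z₀‖ := by linarith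
  have hz0 : z₀ ≠ 0 := by intro e; rw [e] at hz₀; simp at hz₀; linarith
  have hwz : w ≠ z₀ := by intro e; rw [e] at hw; linarith
  have hq : ‖w / z₀‖ < 1 := by
    rw [norm_div, div_lt_one hz₀pos]; linarith
  have hre : 0 < (1 - w / z₀).re := by
    have h1 : (w / z₀).re ≤ ‖w / z₀‖ := by
      exact Complex.re_le_norm _
    simp only [Complex.sub_re, Complex.one_re]
    linarith
  have hslit : (1 - w / z₀) ∈ Complex.slitPlane := Complex.mem_slitPlane_iff.mpr (Or.inl hre)
  have hne : (1:ℂ) - w / z₀ ≠ 0 := by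
    intro e; rw [e] at hre; simp at hre
  have hd1 : HasDerivAt (fun w : ℂ => 1 - w / z₀) (-z₀⁻¹) w := by
    simpa [one_div] using ((hasDerivAt_id w).div_const z₀).const_sub 1
  have hcomp := (Complex.hasDerivAt_log hslit).comp w hd1
  have hval : (1 - w / z₀)⁻¹ * -z₀⁻¹ = (w - z₀)⁻¹ := by
    have h2 : (1 - w / z₀) * z₀ = z₀ - w := by field_simp
    calc (1 - w / z₀)⁻¹ * -z₀⁻¹ = -((1 - w / z₀) * z₀)⁻¹ := by rw [mul_inv]; ring
      _ = -(z₀ - w)⁻¹ := by rw [h2]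
      _ = (w - z₀)⁻¹ := by rw [← inv_neg, neg_sub]
  rw [hval] at hcomp
  exact hcomp


lemma cont_LL {z₀ : ℂ} (hz₀ : 1 < ‖z₀‖) {b : ℝ} (hb : b < 1) :
    ContinuousOn (LL z₀) (closedBall (0:ℂ) b) := by
  intro w hw
  rw [mem_closedBall, dist_zero_right] at hw
  exact ((hasDerivAt_LL hz₀ (lt_of_le_of_lt hw hb)).continuousAt).continuousWithinAt

lemma ibp {r : ℝ} (hr0 : 0 < r) (hr1 : r < 1) {z₀ : ℂ} (hz₀ : 1 < ‖z₀‖) {h : ℂ → ℂ}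
    (hh : DifferentiableOn ℂ h {z : ℂ | r < ‖z‖ ∧ ‖z‖ < 1})
    {ρ : ℝ} (hρ : ρ ∈ Set.Ioo r 1) :
    (∮ w in C(0, ρ), h w / (w - z₀)) = -∮ w in C(0, ρ), deriv h w * LL z₀ w := by
  have hopen := isOpen_ann r 1
  have hρ0 : 0 < ρ := hr0.trans hρ.1
  have hmem : ∀ θ : ℝ, circleMap 0 ρ θ ∈ {z : ℂ | r < ‖z‖ ∧ ‖z‖ < 1} := by
    intro θ
    have : ‖circleMap 0 ρ θ‖ = ρ := by
      rw [norm_circleMap_zero, abs_of_pos hρ0]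
    exact ⟨by rw [this]; exact hρ.1, by rw [this]; exact hρ.2⟩
  have hnorm : ∀ θ : ℝ, ‖circleMap 0 ρ θ‖ = ρ := by
    intro θ; rw [norm_circleMap_zero, abs_of_pos hρ0]
  have hanal := (hh.analyticOnNhd hopen).deriv
  have hderivc : ContinuousOn (deriv h) {z : ℂ | r < ‖z‖ ∧ ‖z‖ < 1} := hanal.continuousOn
  -- derivative of θ ↦ (h * LL z₀) (circleMap 0 ρ θ)
  have hU : ∀ θ : ℝ, HasDerivAt (fun t => h (circleMap 0 ρ t) * LL z₀ (circleMap 0 ρ t))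
      ((circleMap 0 ρ θ * I) •
        (deriv h (circleMap 0 ρ θ) * LL z₀ (circleMap 0 ρ θ) +
          h (circleMap 0 ρ θ) * (circleMap 0 ρ θ - z₀)⁻¹)) θ := by
    intro θ
    have hz := hmem θ
    have hhz : HasDerivAt h (deriv h (circleMap 0 ρ θ)) (circleMap 0 ρ θ) :=
      (hh.differentiableAt (hopen.mem_nhds hz)).hasDerivAt
    have hLz : HasDerivAt (LL z₀) ((circleMap 0 ρ θ - z₀)⁻¹) (circleMap 0 ρ θ) :=
      hasDerivAt_LL hz₀ (by rw [hnorm]; exact hρ.2)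
    have hu : HasDerivAt (fun w => h w * LL z₀ w)
        (deriv h (circleMap 0 ρ θ) * LL z₀ (circleMap 0 ρ θ) +
          h (circleMap 0 ρ θ) * (circleMap 0 ρ θ - z₀)⁻¹) (circleMap 0 ρ θ) := hhz.mul hLz
    exact hu.scomp θ (hasDerivAt_circleMap 0 ρ θ)
  -- continuity of all circle-restricted functions
  have hcm : Continuous (circleMap 0 ρ) := continuous_circleMap 0 ρ
  have hch : Continuous fun θ => h (circleMap 0 ρ θ) :=
    hh.continuousOn.comp_continuous hcm hmem
  have hcd : Continuous fun θ => deriv h (circleMap 0 ρ θ) :=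
    hderivc.comp_continuous hcm hmem
  have hcL : Continuous fun θ => LL z₀ (circleMap 0 ρ θ) := by
    refine (cont_LL hz₀ hρ.2).comp_continuous hcm ?_
    intro θ; rw [mem_closedBall, dist_zero_right, hnorm]
  have hcinv : Continuous fun θ => (circleMap 0 ρ θ - z₀)⁻¹ := by
    refine (hcm.sub continuous_const).inv₀ ?_
    intro θ
    intro e
    have := hnorm θ
    simp only [Pi.sub_apply, sub_eq_zero] at e
    rw [e] at this
    rw [this] at hz₀
    exact absurd hρ.2 (not_lt.2 hz₀.le)
  have hcont : Continuous fun θ : ℝ => (circleMap 0 ρ θ * I) •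
      (deriv h (circleMap 0 ρ θ) * LL z₀ (circleMap 0 ρ θ) +
        h (circleMap 0 ρ θ) * (circleMap 0 ρ θ - z₀)⁻¹) :=
    ((hcm.mul continuous_const).smul ((hcd.mul hcL).add (hch.mul hcinv)))
  -- FTC on the circle
  have key : (∫ θ in (0:ℝ)..(2 * Real.pi), (circleMap 0 ρ θ * I) •
      (deriv h (circleMap 0 ρ θ) * LL z₀ (circleMap 0 ρ θ) +
        h (circleMap 0 ρ θ) * (circleMap 0 ρ θ - z₀)⁻¹)) = 0 := by
    rw [intervalIntegral.integral_eq_sub_of_hasDerivAt (fun θ _ => hU θ)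
      (hcont.intervalIntegrable _ _)]
    have : circleMap 0 ρ (2 * Real.pi) = circleMap 0 ρ 0 := by
      simpa using (periodic_circleMap 0 ρ) 0
    rw [this, sub_self]
  have hsum : (∮ w in C(0, ρ), (deriv h w * LL z₀ w + h w * (w - z₀)⁻¹)) = 0 := by
    rw [circleIntegral]
    simp only [deriv_circleMap]
    exact key
  -- circle integrability of the pieces
  have hi1 : CircleIntegrable (fun w => deriv h w * LL z₀ w) 0 ρ := by
    have : Continuous fun θ => deriv h (circleMap 0 ρ θ) * LL z₀ (circleMap 0 ρ θ) := hcd.mul hcL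
    exact this.intervalIntegrable 0 (2 * Real.pi)
  have hi2 : CircleIntegrable (fun w => h w * (w - z₀)⁻¹) 0 ρ := by
    have : Continuous fun θ => h (circleMap 0 ρ θ) * (circleMap 0 ρ θ - z₀)⁻¹ := hch.mul hcinv
    exact this.intervalIntegrable 0 (2 * Real.pi)
  have hisum : CircleIntegrable (fun w => deriv h w * LL z₀ w + h w * (w - z₀)⁻¹) 0 ρ :=
    hi1.add hi2
  have hsplit : (∮ w in C(0, ρ), h w * (w - z₀)⁻¹) =
      (∮ w in C(0, ρ), (deriv h w * LL z₀ w + h w * (w - z₀)⁻¹)) -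
        ∮ w in C(0, ρ), deriv h w * LL z₀ w := by
    rw [← circleIntegral.integral_sub hisum hi1]
    refine circleIntegral.integral_congr hρ0.le ?_
    intro w _
    ring
  have hdiv : (∮ w in C(0, ρ), h w / (w - z₀)) = ∮ w in C(0, ρ), h w * (w - z₀)⁻¹ :=
    circleIntegral.integral_congr hρ0.le fun w _ => div_eq_mul_inv _ _
  rw [hdiv, hsplit, hsum, zero_sub]

lemma radius_indep {r : ℝ} (hr0 : 0 < r) {f : ℂ → ℂ}
    (hf : DifferentiableOn ℂ f {z : ℂ | r < ‖z‖ ∧ ‖z‖ < 1})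
    {ρ₁ ρ₂ : ℝ} (h1 : ρ₁ ∈ Set.Ioo r 1) (h2 : ρ₂ ∈ Set.Ioo r 1) :
    (∮ w in C(0, ρ₁), f w) = ∮ w in C(0, ρ₂), f w := by
  have hopen := isOpen_ann r 1
  have key : ∀ ρ σ : ℝ, ρ ∈ Set.Ioo r 1 → σ ∈ Set.Ioo r 1 → ρ ≤ σ →
      (∮ w in C(0, σ), f w) = ∮ w in C(0, ρ), f w := by
    intro ρ σ hρ hσ hle
    have hsub : closedBall (0:ℂ) σ \ ball 0 ρ ⊆ {z : ℂ | r < ‖z‖ ∧ ‖z‖ < 1} := by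
      rintro z ⟨hz1, hz2⟩
      rw [mem_closedBall, dist_zero_right] at hz1
      rw [mem_ball, dist_zero_right] at hz2
      push_neg at hz2
      exact ⟨lt_of_lt_of_le hρ.1 hz2, lt_of_le_of_lt hz1 hσ.2⟩
    refine circleIntegral_eq_of_differentiable_on_annulus_off_countable
      (hr0.trans hρ.1) hle Set.countable_empty (hf.continuousOn.mono hsub) ?_
    intro z hz
    refine hf.differentiableAt (hopen.mem_nhds (hsub ?_))
    exact ⟨ball_subset_closedBall hz.1.1, fun hc => hz.1.2 (ball_subset_closedBall hc)⟩
  rcases le_total ρ₁ ρ₂ with hle | hle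
  · exact (key _ _ h1 h2 hle).symm
  · exact key _ _ h2 h1 hle

lemma diff_div {r : ℝ} {z₀ : ℂ} (hz₀ : 1 < ‖z₀‖) {h : ℂ → ℂ}
    (hh : DifferentiableOn ℂ h {z : ℂ | r < ‖z‖ ∧ ‖z‖ < 1}) :
    DifferentiableOn ℂ (fun w => h w / (w - z₀)) {z : ℂ | r < ‖z‖ ∧ ‖z‖ < 1} := by
  refine hh.div (differentiableOn_id.sub (differentiableOn_const _)) ?_
  intro z hz
  refine sub_ne_zero.2 ?_
  intro e
  rw [e] at hz
  exact absurd hz.2 (not_lt.2 hz₀.le)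

set_option maxHeartbeats 2000000 in
lemma crude {r : ℝ} (hr0 : 0 < r) (hr1 : r < 1) {z₀ : ℂ} (hz₀ : 1 < ‖z₀‖) :
    ∃ C : ℝ, 0 < C ∧ ∀ h : ℂ → ℂ,
      DifferentiableOn ℂ h {z : ℂ | r < ‖z‖ ∧ ‖z‖ < 1} →
      IntegrableOn (fun z => ‖deriv h z‖ ^ 2) {z : ℂ | r < ‖z‖ ∧ ‖z‖ < 1} →
      ‖∮ w in C(0, (r + 1) / 2), h w / (w - z₀)‖
        ≤ C * (1 + ∫ z in {z : ℂ | r < ‖z‖ ∧ ‖z‖ < 1}, ‖deriv h z‖ ^ 2) := by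
  set a := (2 * r + 1) / 3 with ha_def
  set b := (r + 2) / 3 with hb_def
  have hra : r < a := by rw [ha_def]; linarith
  have hab : a < b := by rw [ha_def, hb_def]; linarith
  have hb1 : b < 1 := by rw [hb_def]; linarith
  have ha0 : 0 < a := lt_trans hr0 hra
  have hc : 0 < b - a := by linarith
  obtain ⟨C₀, hC₀⟩ :=
    (isCompact_closedBall (0:ℂ) b).exists_bound_of_continuousOn (cont_LL hz₀ hb1)
  set CL := max C₀ 1 with hCL_def
  have hCL1 : (1:ℝ) ≤ CL := le_max_right _ _
  have hCL0 : (0:ℝ) < CL := by linarith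
  have hCLb : ∀ w : ℂ, ‖w‖ ≤ b → ‖LL z₀ w‖ ≤ CL := fun w hw =>
    le_trans (hC₀ w (by rwa [mem_closedBall, dist_zero_right])) (le_max_left _ _)
  refine ⟨CL * (2 * Real.pi + 1 / (b - a)), by positivity, ?_⟩
  intro h hh hint
  have hopen := isOpen_ann r 1
  set D := ∫ z in {z : ℂ | r < ‖z‖ ∧ ‖z‖ < 1}, ‖deriv h z‖ ^ 2 with hD_def
  have hD0 : 0 ≤ D := setIntegral_nonneg hopen.measurableSet (fun z _ => by positivity)
  set Λ := ∮ w in C(0, (r + 1) / 2), h w / (w - z₀) with hΛ_def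
  have hderivc : ContinuousOn (deriv h) {z : ℂ | r < ‖z‖ ∧ ‖z‖ < 1} :=
    ((hh.analyticOnNhd hopen).deriv).continuousOn
  set G : ℝ × ℝ → ℂ := fun q => (circleMap 0 q.1 q.2 * I) *
    (deriv h (circleMap 0 q.1 q.2) * LL z₀ (circleMap 0 q.1 q.2)) with hG_def
  set S := Set.Ioo a b ×ˢ Set.Ioo (-Real.pi) Real.pi with hS_def
  have hmidd : (r+1)/2 ∈ Set.Ioo r 1 := ⟨by linarith, by linarith⟩
  have hnormcm : ∀ (ρ θ : ℝ), 0 < ρ → ‖circleMap 0 ρ θ‖ = ρ := by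
    intro ρ θ hρ; rw [norm_circleMap_zero, abs_of_pos hρ]
  have claim1 : ∀ ρ ∈ Set.Ioo a b,
      (∫ θ in Set.Ioo (-Real.pi) Real.pi, G (ρ, θ)) = -Λ := by
    intro ρ hρ
    have hρ1 : ρ ∈ Set.Ioo r 1 := ⟨hra.trans hρ.1, hρ.2.trans hb1⟩
    have hΛρ : Λ = ∮ w in C(0, ρ), h w / (w - z₀) :=
      radius_indep hr0 (diff_div hz₀ hh) hmidd hρ1
    have hF : (∮ w in C(0, ρ), deriv h w * LL z₀ w)
        = ∫ θ in Set.Ioo (-Real.pi) Real.pi, G (ρ, θ) := by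
      have hper : Function.Periodic (fun θ => G (ρ, θ)) (2 * Real.pi) :=
        (periodic_circleMap 0 ρ).comp fun z => z * I * (deriv h z * LL z₀ z)
      have e1 : (∮ w in C(0, ρ), deriv h w * LL z₀ w)
          = ∫ θ in (0:ℝ)..(2*Real.pi), G (ρ, θ) := by
        rw [circleIntegral]
        congr 1
        funext θ
        rw [deriv_circleMap, smul_eq_mul, hG_def]
      have e2 : (∫ θ in (0:ℝ)..(2*Real.pi), G (ρ, θ))
          = ∫ θ in (-Real.pi)..Real.pi, G (ρ, θ) := by
        have h3 := hper.intervalIntegral_add_eq 0 (-Real.pi)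
        rw [zero_add] at h3
        rw [h3, show -Real.pi + 2 * Real.pi = Real.pi by ring]
      rw [e1, e2, intervalIntegral.integral_of_le (by linarith [Real.pi_pos]),
        MeasureTheory.integral_Ioc_eq_integral_Ioo]
    rw [hΛρ, ibp hr0 hr1 hz₀ hh hρ1, neg_neg]
    exact hF.symm
  -- continuity on the compact rectangle
  have hcm2 : Continuous fun q : ℝ × ℝ => circleMap 0 q.1 q.2 := by
    have e : (fun q : ℝ × ℝ => circleMap 0 q.1 q.2)
        = fun q : ℝ × ℝ => (0:ℂ) + (q.1 : ℂ) * Complex.exp ((q.2 : ℂ) * I) := by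
      funext q; rw [circleMap]
    rw [e]
    exact continuous_const.add ((Complex.continuous_ofReal.comp continuous_fst).mul
      (Complex.continuous_exp.comp ((Complex.continuous_ofReal.comp continuous_snd).mul
        continuous_const)))
  set Q := Set.Icc a b ×ˢ Set.Icc (-Real.pi) Real.pi with hQ_def
  have hQcompact : IsCompact Q := isCompact_Icc.prod isCompact_Icc
  have hQS : S ⊆ Q := Set.prod_mono Set.Ioo_subset_Icc_self Set.Ioo_subset_Icc_self
  have hmapsAnn : Set.MapsTo (fun q : ℝ × ℝ => circleMap 0 q.1 q.2) Q
      {z : ℂ | r < ‖z‖ ∧ ‖z‖ < 1} := by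
    intro q hq
    have hn : ‖circleMap 0 q.1 q.2‖ = q.1 := hnormcm _ _ (lt_of_lt_of_le ha0 hq.1.1)
    exact ⟨by rw [hn]; exact lt_of_lt_of_le hra hq.1.1,
      by rw [hn]; exact lt_of_le_of_lt hq.1.2 hb1⟩
  have hmapsB : Set.MapsTo (fun q : ℝ × ℝ => circleMap 0 q.1 q.2) Q (closedBall (0:ℂ) b) := by
    intro q hq
    rw [mem_closedBall, dist_zero_right, hnormcm _ _ (lt_of_lt_of_le ha0 hq.1.1)]
    exact hq.1.2
  have hcdQ : ContinuousOn (fun q : ℝ × ℝ => deriv h (circleMap 0 q.1 q.2)) Q :=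
    hderivc.comp hcm2.continuousOn hmapsAnn
  have hcLQ : ContinuousOn (fun q : ℝ × ℝ => LL z₀ (circleMap 0 q.1 q.2)) Q :=
    (cont_LL hz₀ hb1).comp hcm2.continuousOn hmapsB
  have hGcont : ContinuousOn G Q :=
    (hcm2.continuousOn.mul continuousOn_const).mul (hcdQ.mul hcLQ)
  have hGint : IntegrableOn G S := (hGcont.integrableOn_compact hQcompact).mono_set hQS
  have hSmeas : MeasurableSet S := measurableSet_Ioo.prod measurableSet_Ioo
  have hvolS : (volume S).toReal = (b - a) * (2 * Real.pi) := by
    rw [hS_def, Measure.volume_eq_prod, Measure.prod_prod, Real.volume_Ioo,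
      Real.volume_Ioo, ← ENNReal.ofReal_mul (by linarith)]
    rw [ENNReal.toReal_ofReal (by nlinarith [Real.pi_pos])]
    ring
  have hfub : (∫ q in S, G q) = (b - a) • (-Λ) := by
    rw [Measure.volume_eq_prod]
    have h1 : (∫ q in S, G q ∂(volume.prod volume))
        = ∫ ρ in Set.Ioo a b, ∫ θ in Set.Ioo (-Real.pi) Real.pi, G (ρ, θ) := by
      rw [hS_def]
      exact MeasureTheory.setIntegral_prod G (by rwa [← Measure.volume_eq_prod, ← hS_def])
    rw [h1, setIntegral_congr_fun measurableSet_Ioo (fun ρ hρ => claim1 ρ hρ),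
      setIntegral_const, Real.volume_real_Ioo_of_le (by linarith)]
  have hnorm1 : (b - a) * ‖Λ‖ ≤ ∫ q in S, ‖G q‖ := by
    have e : ‖∫ q in S, G q‖ = (b - a) * ‖Λ‖ := by
      rw [hfub, norm_smul, Real.norm_of_nonneg (by linarith), norm_neg]
    rw [← e]
    exact norm_integral_le_integral_norm G
  set Ψ : ℝ × ℝ → ℝ := fun q => CL * (1 + q.1 * ‖deriv h (circleMap 0 q.1 q.2)‖ ^ 2)
    with hΨ_def
  have hΨint : IntegrableOn Ψ S := by
    have hΨcont : ContinuousOn Ψ Q :=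
      continuousOn_const.mul (continuousOn_const.add ((continuous_fst.continuousOn).mul
        ((hcdQ.norm).pow 2)))
    exact (hΨcont.integrableOn_compact hQcompact).mono_set hQS
  have hnorm2 : (∫ q in S, ‖G q‖) ≤ ∫ q in S, Ψ q := by
    refine setIntegral_mono_on hGint.norm hΨint hSmeas ?_
    rintro ⟨ρ, θ⟩ hq
    have hρ0 : 0 < ρ := ha0.trans hq.1.1
    have hρb : ρ ≤ b := (hq.1.2).le
    have hρ1 : ρ ≤ 1 := by linarith
    have hL : ‖LL z₀ (circleMap 0 ρ θ)‖ ≤ CL :=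
      hCLb _ (by rw [hnormcm _ _ hρ0]; exact hρb)
    have hd0 : (0:ℝ) ≤ ‖deriv h (circleMap 0 ρ θ)‖ := norm_nonneg _
    have hGnorm : ‖G (ρ, θ)‖
        = ρ * (‖deriv h (circleMap 0 ρ θ)‖ * ‖LL z₀ (circleMap 0 ρ θ)‖) := by
      rw [hG_def]
      simp only [norm_mul, Complex.norm_I, mul_one]
      rw [hnormcm _ _ hρ0]
    rw [hGnorm]
    simp only [hΨ_def]
    have key1 : ρ * ‖deriv h (circleMap 0 ρ θ)‖
        ≤ 1 + ρ * ‖deriv h (circleMap 0 ρ θ)‖ ^ 2 := by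
      nlinarith [mul_nonneg hρ0.le (sq_nonneg (2 * ‖deriv h (circleMap 0 ρ θ)‖ - 1))]
    nlinarith [mul_le_mul_of_nonneg_left hL (mul_nonneg hρ0.le hd0),
      mul_le_mul_of_nonneg_left key1 hCL0.le]
  have hSfin : volume S ≠ ⊤ := by
    rw [hS_def, Measure.volume_eq_prod, Measure.prod_prod, Real.volume_Ioo, Real.volume_Ioo]
    exact (ENNReal.mul_lt_top ENNReal.ofReal_lt_top ENNReal.ofReal_lt_top).ne
  have hint2 : IntegrableOn (fun q : ℝ × ℝ => q.1 * ‖deriv h (circleMap 0 q.1 q.2)‖ ^ 2) S :=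
    (((continuous_fst.continuousOn).mul ((hcdQ.norm).pow 2)).integrableOn_compact
      hQcompact).mono_set hQS
  have hsplit2 : (∫ q in S, Ψ q) = CL * ((volume S).toReal
      + ∫ q in S, q.1 * ‖deriv h (circleMap 0 q.1 q.2)‖ ^ 2) := by
    rw [hΨ_def]
    rw [integral_const_mul]
    congr 1
    rw [MeasureTheory.integral_add (integrableOn_const (C := (1:ℝ)) hSfin) hint2]
    congr 1
    rw [setIntegral_const, smul_eq_mul, mul_one, Measure.real]
  have hpcs : ∀ q : ℝ × ℝ, Complex.polarCoord.symm q = circleMap 0 q.1 q.2 := by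
    intro q
    rw [Complex.polarCoord_symm_apply, circleMap, Complex.exp_mul_I, Complex.ofReal_cos,
      Complex.ofReal_sin]
    ring
  have hpolar : (∫ q in S, q.1 * ‖deriv h (circleMap 0 q.1 q.2)‖ ^ 2)
      = ∫ z in {z : ℂ | a < ‖z‖ ∧ ‖z‖ < b}, ‖deriv h z‖ ^ 2 := by
    have hmeas_ann : MeasurableSet {z : ℂ | a < ‖z‖ ∧ ‖z‖ < b} :=
      (isOpen_ann a b).measurableSet
    have e1 : (∫ z in {z : ℂ | a < ‖z‖ ∧ ‖z‖ < b}, ‖deriv h z‖ ^ 2)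
        = ∫ z : ℂ, Set.indicator {z : ℂ | a < ‖z‖ ∧ ‖z‖ < b}
            (fun z => ‖deriv h z‖ ^ 2) z :=
      (MeasureTheory.integral_indicator hmeas_ann).symm
    have hSsub : S ⊆ Set.Ioi (0:ℝ) ×ˢ Set.Ioo (-Real.pi) Real.pi := by
      rintro ⟨ρ, θ⟩ hq
      exact ⟨ha0.trans hq.1.1, hq.2⟩
    have heq : Set.EqOn
        (fun p : ℝ × ℝ => p.1 • Set.indicator {z : ℂ | a < ‖z‖ ∧ ‖z‖ < b}
          (fun z => ‖deriv h z‖ ^ 2) (Complex.polarCoord.symm p))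
        (Set.indicator S fun q : ℝ × ℝ => q.1 * ‖deriv h (circleMap 0 q.1 q.2)‖ ^ 2)
        (Set.Ioi (0:ℝ) ×ˢ Set.Ioo (-Real.pi) Real.pi) := by
      rintro ⟨ρ, θ⟩ hp
      have hρ0 : 0 < ρ := hp.1
      have hn : ‖Complex.polarCoord.symm (ρ, θ)‖ = ρ := by
        rw [hpcs]; exact hnormcm _ _ hρ0
      by_cases hmem : ρ ∈ Set.Ioo a b
      · have h1 : Complex.polarCoord.symm (ρ, θ) ∈ {z : ℂ | a < ‖z‖ ∧ ‖z‖ < b} := by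
          rw [Set.mem_setOf_eq, hn]; exact ⟨hmem.1, hmem.2⟩
        have h2 : ((ρ, θ) : ℝ × ℝ) ∈ S := ⟨hmem, hp.2⟩
        simp only [Set.indicator_of_mem h1, Set.indicator_of_mem h2, smul_eq_mul]
        rw [hpcs]
      · have h1 : Complex.polarCoord.symm (ρ, θ) ∉ {z : ℂ | a < ‖z‖ ∧ ‖z‖ < b} := by
          rw [Set.mem_setOf_eq, hn]; exact hmem
        have h2 : ((ρ, θ) : ℝ × ℝ) ∉ S := fun hcon => hmem hcon.1
        simp only [Set.indicator_of_notMem h1, Set.indicator_of_notMem h2, smul_zero]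
    symm
    rw [e1, ← Complex.integral_comp_polarCoord_symm, polarCoord_target,
      setIntegral_congr_fun (measurableSet_Ioi.prod measurableSet_Ioo) heq,
      setIntegral_indicator hSmeas, Set.inter_eq_right.mpr hSsub]
  have hannsub : (∫ z in {z : ℂ | a < ‖z‖ ∧ ‖z‖ < b}, ‖deriv h z‖ ^ 2) ≤ D := by
    refine setIntegral_mono_set hint
      (Filter.Eventually.of_forall fun z => by positivity) ?_
    refine Filter.Eventually.of_forall fun z hz => ?_
    exact ⟨hra.trans hz.1, hz.2.trans hb1⟩
  have hmain : (b - a) * ‖Λ‖ ≤ CL * ((b - a) * (2 * Real.pi) + D) :=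
    calc (b - a) * ‖Λ‖ ≤ ∫ q in S, ‖G q‖ := hnorm1
      _ ≤ ∫ q in S, Ψ q := hnorm2
      _ = CL * ((volume S).toReal
          + ∫ q in S, q.1 * ‖deriv h (circleMap 0 q.1 q.2)‖ ^ 2) := hsplit2
      _ = CL * ((b - a) * (2 * Real.pi)
          + ∫ z in {z : ℂ | a < ‖z‖ ∧ ‖z‖ < b}, ‖deriv h z‖ ^ 2) := by
          rw [hvolS, hpolar]
      _ ≤ CL * ((b - a) * (2 * Real.pi) + D) := by
          have := hannsub
          nlinarith [hCL0]
  rw [← mul_le_mul_iff_right₀ hc]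
  have hba1 : (b - a) * (1 / (b - a)) = 1 := mul_one_div_cancel hc.ne'
  have hexp : (b - a) * (CL * (2 * Real.pi + 1 / (b - a)) * (1 + D))
      = CL * ((b - a) * (2 * Real.pi) + 1) * (1 + D) := by
    calc (b - a) * (CL * (2 * Real.pi + 1 / (b - a)) * (1 + D))
        = CL * ((b - a) * (2 * Real.pi) + (b - a) * (1 / (b - a))) * (1 + D) := by ring
      _ = CL * ((b - a) * (2 * Real.pi) + 1) * (1 + D) := by rw [hba1]
  rw [hexp]
  nlinarith [mul_nonneg (mul_nonneg (mul_nonneg Real.pi_pos.le hCL0.le) hc.le) hD0,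
    Real.pi_pos, mul_nonneg hCL0.le hD0]

lemma bounded {r : ℝ} (hr0 : 0 < r) (hr1 : r < 1) {z₀ : ℂ} (hz₀ : 1 < ‖z₀‖) :
    ∃ M : ℝ, 0 < M ∧ ∀ h : ℂ → ℂ,
      DifferentiableOn ℂ h {z : ℂ | r < ‖z‖ ∧ ‖z‖ < 1} →
      IntegrableOn (fun z => ‖deriv h z‖ ^ 2) {z : ℂ | r < ‖z‖ ∧ ‖z‖ < 1} →
      ‖∮ w in C(0, (r + 1) / 2), h w / (w - z₀)‖
        ≤ M * Real.sqrt (∫ z in {z : ℂ | r < ‖z‖ ∧ ‖z‖ < 1}, ‖deriv h z‖ ^ 2) := by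
  obtain ⟨C, hC0, hC⟩ := crude hr0 hr1 hz₀
  refine ⟨2 * C, by linarith, ?_⟩
  intro h hh hint
  have hopen := isOpen_ann r 1
  set D := ∫ z in {z : ℂ | r < ‖z‖ ∧ ‖z‖ < 1}, ‖deriv h z‖ ^ 2 with hD_def
  have hD0 : 0 ≤ D := setIntegral_nonneg hopen.measurableSet fun z _ => by positivity
  have hscale : ∀ t : ℝ, 0 < t →
      t * ‖∮ w in C(0, (r + 1) / 2), h w / (w - z₀)‖ ≤ C * (1 + t ^ 2 * D) := by
    intro t ht
    have hht : DifferentiableOn ℂ (fun w => (t:ℂ) * h w) {z : ℂ | r < ‖z‖ ∧ ‖z‖ < 1} :=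
      hh.const_mul _
    have hderiv_eq : Set.EqOn (fun z => ‖deriv (fun w => (t:ℂ) * h w) z‖ ^ 2)
        (fun z => t ^ 2 * ‖deriv h z‖ ^ 2) {z : ℂ | r < ‖z‖ ∧ ‖z‖ < 1} := by
      intro z hz
      have hder : deriv (fun w => (t:ℂ) * h w) z = (t:ℂ) * deriv h z :=
        deriv_const_mul _ (hh.differentiableAt (hopen.mem_nhds hz))
      simp only
      rw [hder, norm_mul, mul_pow, Complex.norm_real, Real.norm_of_nonneg ht.le]
    have hintt : IntegrableOn (fun z => ‖deriv (fun w => (t:ℂ) * h w) z‖ ^ 2)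
        {z : ℂ | r < ‖z‖ ∧ ‖z‖ < 1} :=
      IntegrableOn.congr_fun (hint.const_mul (t ^ 2)) (fun z hz => (hderiv_eq hz).symm)
        hopen.measurableSet
    have hDt : (∫ z in {z : ℂ | r < ‖z‖ ∧ ‖z‖ < 1}, ‖deriv (fun w => (t:ℂ) * h w) z‖ ^ 2)
        = t ^ 2 * D := by
      rw [setIntegral_congr_fun hopen.measurableSet hderiv_eq, integral_const_mul]
    have hΛt : (∮ w in C(0, (r + 1) / 2), ((t:ℂ) * h w) / (w - z₀))
        = (t:ℂ) * ∮ w in C(0, (r + 1) / 2), h w / (w - z₀) := by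
      calc (∮ w in C(0, (r + 1) / 2), ((t:ℂ) * h w) / (w - z₀))
          = ∮ w in C(0, (r + 1) / 2), (t:ℂ) • (h w / (w - z₀)) := by
            refine circleIntegral.integral_congr (by linarith) fun w _ => ?_
            rw [smul_eq_mul, mul_div_assoc]
        _ = (t:ℂ) * ∮ w in C(0, (r + 1) / 2), h w / (w - z₀) := by
            rw [circleIntegral.integral_smul, smul_eq_mul]
    have hfinal := hC _ hht hintt
    rw [hΛt, hDt, norm_mul, Complex.norm_real, Real.norm_of_nonneg ht.le] at hfinal
    exact hfinal
  rcases eq_or_lt_of_le hD0 with hD | hD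
  · have hzero : ‖∮ w in C(0, (r + 1) / 2), h w / (w - z₀)‖ ≤ 0 := by
      by_contra hpos
      push_neg at hpos
      have hne : ‖∮ w in C(0, (r + 1) / 2), h w / (w - z₀)‖ ≠ 0 := ne_of_gt hpos
      have ht : 0 < (C + 1) / ‖∮ w in C(0, (r + 1) / 2), h w / (w - z₀)‖ := by positivity
      have h2 := hscale _ ht
      rw [← hD] at h2
      simp only [mul_zero, add_zero, mul_one] at h2
      rw [div_mul_cancel₀ _ hne] at h2
      linarith
    have h0 : ‖∮ w in C(0, (r + 1) / 2), h w / (w - z₀)‖ = 0 :=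
      le_antisymm hzero (norm_nonneg _)
    rw [h0]
    exact mul_nonneg (by linarith) (Real.sqrt_nonneg _)
  · have hst : 0 < Real.sqrt D := Real.sqrt_pos.2 hD
    have h2 := hscale (Real.sqrt D)⁻¹ (inv_pos.2 hst)
    have hsq : ((Real.sqrt D)⁻¹) ^ 2 * D = 1 := by
      rw [inv_pow, Real.sq_sqrt hD0]
      exact inv_mul_cancel₀ (ne_of_gt hD)
    rw [hsq, inv_mul_le_iff₀ hst] at h2
    calc ‖∮ w in C(0, (r + 1) / 2), h w / (w - z₀)‖
        ≤ Real.sqrt D * (C * (1 + 1)) := h2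
      _ = 2 * C * Real.sqrt D := by ring

lemma disk_vanish {ρ : ℝ} (hρ0 : 0 ≤ ρ) (hρ1 : ρ < 1) {z₀ : ℂ} (hz₀ : 1 < ‖z₀‖)
    {g : ℂ → ℂ} (hg : DifferentiableOn ℂ g (ball (0:ℂ) 1)) :
    (∮ w in C(0, ρ), g w / (w - z₀)) = 0 := by
  have hsub : closedBall (0:ℂ) ρ ⊆ ball 0 1 := closedBall_subset_ball hρ1
  have hd : DifferentiableOn ℂ (fun w => g w / (w - z₀)) (ball (0:ℂ) 1) := by
    refine hg.div (differentiableOn_id.sub (differentiableOn_const _)) ?_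
    intro z hz
    rw [mem_ball_zero_iff] at hz
    refine sub_ne_zero.2 ?_
    intro e; rw [e] at hz; exact absurd hz (not_lt.2 hz₀.le)
  exact circleIntegral_eq_zero_of_differentiable_on_off_countable hρ0 Set.countable_empty
    (hd.continuousOn.mono hsub)
    (fun z hz => hd.differentiableAt (isOpen_ball.mem_nhds (hsub (ball_subset_closedBall hz.1))))

lemma inv_nonvanish {ρ : ℝ} (h0 : 0 < ρ) (h1 : ρ < 1) {z₀ : ℂ} (hz₀ : 1 < ‖z₀‖) :
    (∮ w in C(0, ρ), w⁻¹ / (w - z₀)) ≠ 0 := by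
  have hz0 : z₀ ≠ 0 := by
    intro e; rw [e] at hz₀; simp at hz₀; linarith
  have hsphere : ∀ w : ℂ, w ∈ sphere (0:ℂ) ρ → w ≠ 0 ∧ w ≠ z₀ := by
    intro w hw
    rw [mem_sphere_zero_iff_norm] at hw
    constructor
    · intro e; rw [e] at hw; simp at hw; linarith
    · intro e; rw [e] at hw; rw [hw] at hz₀; linarith
  have heq : Set.EqOn (fun w : ℂ => w⁻¹ / (w - z₀))
      (fun w : ℂ => z₀⁻¹ • ((w - z₀)⁻¹ - w⁻¹)) (sphere 0 ρ) := by
    intro w hw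
    obtain ⟨hw0, hwz⟩ := hsphere w hw
    have hsub : w - z₀ ≠ 0 := sub_ne_zero.2 hwz
    simp only [smul_eq_mul]
    field_simp
    ring
  rw [circleIntegral.integral_congr h0.le heq]
  have hint1 : CircleIntegrable (fun w : ℂ => (w - z₀)⁻¹) 0 ρ := by
    refine ContinuousOn.circleIntegrable h0.le ?_
    intro w hw
    exact ((continuousAt_id.sub continuousAt_const).inv₀
      (sub_ne_zero.2 (hsphere w hw).2)).continuousWithinAt
  have hint2 : CircleIntegrable (fun w : ℂ => w⁻¹) 0 ρ := by
    refine ContinuousOn.circleIntegrable h0.le ?_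
    intro w hw
    exact (continuousAt_inv₀ (hsphere w hw).1).continuousWithinAt
  rw [circleIntegral.integral_smul, circleIntegral.integral_sub hint1 hint2]
  have hA : (∮ w in C(0, ρ), (w - z₀)⁻¹) = 0 := by
    refine circleIntegral_eq_zero_of_differentiable_on_off_countable h0.le Set.countable_empty ?_ ?_
    · intro w hw
      rw [mem_closedBall, dist_zero_right] at hw
      have : w ≠ z₀ := by intro e; rw [e] at hw; linarith
      exact ((continuousAt_id.sub continuousAt_const).inv₀ (sub_ne_zero.2 this)).continuousWithinAt
    · intro w hw
      rw [Set.mem_diff, mem_ball, dist_zero_right] at hw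
      have : w ≠ z₀ := by intro e; rw [e] at hw; have := hw.1; linarith
      exact (differentiableAt_id.sub (differentiableAt_const _)).inv (sub_ne_zero.2 this)
  have hB : (∮ w in C(0, ρ), w⁻¹) = 2 * Real.pi * I := by
    have : (∮ w in C(0, ρ), w⁻¹) = ∮ w in C(0, ρ), (w - 0)⁻¹ := by
      congr 1; ext w; rw [sub_zero]
    rw [this]
    exact circleIntegral.integral_sub_inv_of_mem_ball (mem_ball_self h0)
  rw [hA, hB]
  simp only [zero_sub, smul_eq_mul]
  intro hcon
  have hpi : (2 * (Real.pi:ℂ) * I) ≠ 0 := by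
    simp [Real.pi_ne_zero, I_ne_zero, Complex.ofReal_ne_zero]
  rw [mul_neg, neg_eq_zero, mul_eq_zero] at hcon
  rcases hcon with hcon | hcon
  · exact inv_ne_zero hz0 hcon
  · exact hpi hcon


end AnnulusAux

open AnnulusAux in
/-- On the annulus `Σ = {r < |z| < 1}`, the Cauchy-type functional
`Λ(h) = (1/2πi) ∮_{|w|=ρ} h(w)/(w - z₀) dw` (for `|z₀| > 1`) is independent of
`ρ ∈ (r,1)`, is bounded for the Dirichlet norm `(|h(p)|² + ∬_Σ |h'|²)^{1/2}`,
vanishes on restrictions of disk Dirichlet functions, but is not identically zero. -/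
theorem annulus_cauchy_functional
    (r : ℝ) (hr0 : 0 < r) (hr1 : r < 1)
    (z₀ : ℂ) (hz₀ : 1 < ‖z₀‖)
    (p : ℂ) (hp : p ∈ {z : ℂ | r < ‖z‖ ∧ ‖z‖ < 1}) :
    (∀ h : ℂ → ℂ, DifferentiableOn ℂ h {z : ℂ | r < ‖z‖ ∧ ‖z‖ < 1} →
      ∀ ρ₁ ∈ Set.Ioo r 1, ∀ ρ₂ ∈ Set.Ioo r 1,
        (∮ w in C(0, ρ₁), h w / (w - z₀)) = ∮ w in C(0, ρ₂), h w / (w - z₀))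
    ∧ (∃ M : ℝ, 0 < M ∧ ∀ h : ℂ → ℂ,
        DifferentiableOn ℂ h {z : ℂ | r < ‖z‖ ∧ ‖z‖ < 1} →
        IntegrableOn (fun z => ‖deriv h z‖ ^ 2) {z : ℂ | r < ‖z‖ ∧ ‖z‖ < 1} →
        ‖(2 * (Real.pi : ℂ) * Complex.I)⁻¹ * ∮ w in C(0, (r + 1) / 2), h w / (w - z₀)‖
          ≤ M * Real.sqrt (‖h p‖ ^ 2 +
              ∫ z in {z : ℂ | r < ‖z‖ ∧ ‖z‖ < 1}, ‖deriv h z‖ ^ 2))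
    ∧ (∀ g : ℂ → ℂ, DifferentiableOn ℂ g (ball (0 : ℂ) 1) →
        IntegrableOn (fun z => ‖deriv g z‖ ^ 2) (ball (0 : ℂ) 1) →
        (∮ w in C(0, (r + 1) / 2), g w / (w - z₀)) = 0)
    ∧ (∃ h : ℂ → ℂ, DifferentiableOn ℂ h {z : ℂ | r < ‖z‖ ∧ ‖z‖ < 1} ∧
        IntegrableOn (fun z => ‖deriv h z‖ ^ 2) {z : ℂ | r < ‖z‖ ∧ ‖z‖ < 1} ∧
        (∮ w in C(0, (r + 1) / 2), h w / (w - z₀)) ≠ 0) := by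
  have hopen := isOpen_ann r 1
  refine ⟨?_, ?_, ?_, ?_⟩
  · intro h hh ρ₁ h1 ρ₂ h2
    exact radius_indep hr0 (diff_div hz₀ hh) h1 h2
  · obtain ⟨M, hM0, hM⟩ := bounded hr0 hr1 hz₀
    refine ⟨M, hM0, ?_⟩
    intro h hh hint
    have h1 := hM h hh hint
    have h2 : ‖(2 * (Real.pi : ℂ) * Complex.I)⁻¹ * ∮ w in C(0, (r + 1) / 2), h w / (w - z₀)‖
        ≤ ‖∮ w in C(0, (r + 1) / 2), h w / (w - z₀)‖ := by
      rw [norm_mul]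
      have hle1 : ‖(2 * (Real.pi : ℂ) * Complex.I)⁻¹‖ ≤ 1 := by
        rw [norm_inv, norm_mul, norm_mul, Complex.norm_I, mul_one]
        have e2 : ‖(2:ℂ)‖ = 2 := by simp
        have eπ : ‖((Real.pi : ℝ) : ℂ)‖ = Real.pi := by
          rw [Complex.norm_real, Real.norm_of_nonneg Real.pi_pos.le]
        rw [e2, eπ]
        rw [inv_le_one_iff₀]
        right
        nlinarith [Real.pi_gt_three]
      nlinarith [norm_nonneg (∮ w in C(0, (r + 1) / 2), h w / (w - z₀)),
        norm_nonneg ((2 * (Real.pi : ℂ) * Complex.I)⁻¹)]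
    refine le_trans h2 (le_trans h1 ?_)
    have hmono : Real.sqrt (∫ z in {z : ℂ | r < ‖z‖ ∧ ‖z‖ < 1}, ‖deriv h z‖ ^ 2)
        ≤ Real.sqrt (‖h p‖ ^ 2 +
            ∫ z in {z : ℂ | r < ‖z‖ ∧ ‖z‖ < 1}, ‖deriv h z‖ ^ 2) :=
      Real.sqrt_le_sqrt (le_add_of_nonneg_left (sq_nonneg _))
    exact mul_le_mul_of_nonneg_left hmono hM0.le
  · intro g hg _
    exact disk_vanish (by linarith) (by linarith) hz₀ hg
  · refine ⟨fun w => w⁻¹, ?_, ?_, inv_nonvanish (by linarith) (by linarith) hz₀⟩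
    · intro z hz
      have hz0 : z ≠ 0 := by
        intro e; rw [e] at hz; simp at hz; linarith
      exact (differentiableAt_inv hz0).differentiableWithinAt
    · have hf_eq : (fun z : ℂ => ‖deriv (fun w => w⁻¹) z‖ ^ 2)
          = fun z : ℂ => ‖(-(z ^ 2)⁻¹ : ℂ)‖ ^ 2 := by
        funext z; rw [deriv_inv]
      rw [hf_eq]
      refine Measure.integrableOn_of_bounded (M := ((r ^ 2)⁻¹) ^ 2) ?_ ?_ ?_
      · have hsub : {z : ℂ | r < ‖z‖ ∧ ‖z‖ < 1} ⊆ ball (0:ℂ) 1 := by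
          intro z hz
          rw [mem_ball_zero_iff]
          exact hz.2
        exact (lt_of_le_of_lt (measure_mono hsub) measure_ball_lt_top).ne
      · exact (((measurable_id.pow_const 2).inv.neg.norm.pow_const 2).aestronglyMeasurable)
      · rw [ae_restrict_iff' hopen.measurableSet]
        refine ae_of_all _ fun z hz => ?_
        have hzr : r < ‖z‖ := hz.1
        have h1 : ‖(-(z ^ 2)⁻¹ : ℂ)‖ = (‖z‖ ^ 2)⁻¹ := by
          rw [norm_neg, norm_inv, norm_pow]
        rw [Real.norm_of_nonneg (by positivity), h1]
        have h2 : r ^ 2 ≤ ‖z‖ ^ 2 := by nlinarith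
        have h3 : (‖z‖ ^ 2)⁻¹ ≤ (r ^ 2)⁻¹ := inv_anti₀ (by positivity) h2
        exact pow_le_pow_left₀ (by positivity) h3 2
end

section
/- Every holomorphic function on the punctured disk 𝔻 \ {0} with finite Dirichlet energy ∬_{𝔻\{0}} |h'|² dA < ∞ extends to a holomorphic function on 𝔻. -/
open MeasureTheory Metric Set Real Filter
open scoped ENNReal NNReal Topology


lemma lintegral_polar_real (g : ℝ × ℝ → ℝ≥0∞) :
    ∫⁻ p, g p = ∫⁻ p in polarCoord.target, ENNReal.ofReal p.1 * g (polarCoord.symm p) := by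
  set B : ℝ × ℝ → ℝ × ℝ →L[ℝ] ℝ × ℝ := fun p =>
    LinearMap.toContinuousLinearMap (Matrix.toLin (Module.Basis.finTwoProd ℝ) (Module.Basis.finTwoProd ℝ)
      !![cos p.2, -p.1 * sin p.2; sin p.2, p.1 * cos p.2]) with hB
  have B_det : ∀ p, (B p).det = p.1 := by
    intro p
    conv_rhs => rw [← one_mul p.1, ← cos_sq_add_sin_sq p.2]
    simp only [hB, neg_mul, LinearMap.det_toContinuousLinearMap, LinearMap.det_toLin,
      Matrix.det_fin_two_of, sub_neg_eq_add]
    ring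
  calc ∫⁻ p, g p = ∫⁻ p in polarCoord.source, g p := by
        rw [← setLIntegral_univ]
        exact setLIntegral_congr polarCoord_source_ae_eq_univ.symm
    _ = ∫⁻ p in polarCoord.symm '' polarCoord.target, g p := by
        rw [polarCoord.symm_image_target_eq_source]
    _ = ∫⁻ p in polarCoord.target, ENNReal.ofReal |(B p).det| * g (polarCoord.symm p) :=
        lintegral_image_eq_lintegral_abs_det_fderiv_mul volume
          polarCoord.open_target.measurableSet
          (fun p _ => (hasFDerivAt_polarCoord_symm p).hasFDerivWithinAt)
          polarCoord.symm.injOn g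
    _ = ∫⁻ p in polarCoord.target, ENNReal.ofReal p.1 * g (polarCoord.symm p) := by
        apply setLIntegral_congr_fun polarCoord.open_target.measurableSet
        intro p hp
        dsimp only
        rw [B_det, abs_of_pos hp.1]

lemma lintegral_polar_complex (g : ℂ → ℝ≥0∞) :
    ∫⁻ z, g z
      = ∫⁻ p in Set.Ioi (0:ℝ) ×ˢ Set.Ioo (-π) π, ENNReal.ofReal p.1 * g (Complex.polarCoord.symm p) := by
  have h1 : ∫⁻ z, g z = ∫⁻ p, g (Complex.measurableEquivRealProd.symm p) := by
    rw [← Complex.volume_preserving_equiv_real_prod.map_eq,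
      lintegral_map_equiv (fun p => g (Complex.measurableEquivRealProd.symm p))
        Complex.measurableEquivRealProd]
    simp
  rw [h1, lintegral_polar_real]
  rfl

lemma circle_mean {f : ℂ → ℂ} {U : Set ℂ} (hU : IsOpen U) (hf : DifferentiableOn ℂ f U)
    {z : ℂ} {s : ℝ} (hs : 0 < s) (hsub : closedBall z s ⊆ U) :
    ∫ θ in (0:ℝ)..(2*π), f (circleMap z s θ) = (2*π : ℝ) • f z := by
  have hc : ContinuousOn f (closedBall z s) := hf.continuousOn.mono hsub
  have hd : ∀ w ∈ ball z s \ (∅ : Set ℂ), DifferentiableAt ℂ f w := fun w hw =>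
    hf.differentiableAt (hU.mem_nhds (hsub (ball_subset_closedBall hw.1)))
  have H := Complex.circleIntegral_sub_center_inv_smul_of_differentiable_on_off_countable hs
    Set.countable_empty hc hd
  rw [circleIntegral] at H
  have H2 : ∫ θ in (0:ℝ)..(2*π), Complex.I * f (circleMap z s θ)
      = (2 * ↑π * Complex.I) • f z := by
    rw [← H]
    apply intervalIntegral.integral_congr
    intro θ _
    have hne : circleMap 0 s θ ≠ 0 := circleMap_ne_center hs.ne'
    simp only [deriv_circleMap, circleMap_sub_center, smul_eq_mul]
    field_simp
  rw [intervalIntegral.integral_const_mul, smul_eq_mul] at H2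
  have H3 : Complex.I * ∫ θ in (0:ℝ)..(2*π), f (circleMap z s θ)
      = Complex.I * ((2*↑π) * f z) := by rw [H2]; ring
  have := mul_left_cancel₀ Complex.I_ne_zero H3
  rw [this, Complex.real_smul]
  push_cast
  ring

lemma circle_sq_bound {f : ℂ → ℂ} {U : Set ℂ} (hU : IsOpen U) (hf : DifferentiableOn ℂ f U)
    {z : ℂ} {s : ℝ} (hs : 0 < s) (hsub : closedBall z s ⊆ U) :
    ENNReal.ofReal (2*π*‖f z‖^2)
      ≤ ∫⁻ θ in Ioo (-π) π, ENNReal.ofReal (‖f (circleMap z s θ)‖^2) := by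
  have hcont : Continuous fun θ => f (circleMap z s θ) := by
    rw [continuous_iff_continuousAt]
    intro θ
    exact ((hf.differentiableAt
      (hU.mem_nhds (hsub (circleMap_mem_closedBall z hs.le θ)))).continuousAt).comp
      (continuous_circleMap z s).continuousAt
  set g : ℝ → ℝ := fun θ => ‖f (circleMap z s θ)‖ with hg
  have hgc : Continuous g := hcont.norm
  have hgnn : ∀ θ, 0 ≤ g θ := fun θ => norm_nonneg _
  -- step 1 : mean value inequality
  have hper : Function.Periodic g (2*π) := fun θ => by
    simp only [hg]
    rw [periodic_circleMap z s θ]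
  have hshift : ∫ θ in (-π)..π, g θ = ∫ θ in (0:ℝ)..(2*π), g θ := by
    have := hper.intervalIntegral_add_eq (-π) 0
    norm_num at this
    convert this using 2
    ring
  have step1 : 2*π*‖f z‖ ≤ ∫ θ in (-π)..π, g θ := by
    rw [hshift]
    have h1 : ‖(2*π : ℝ) • f z‖ = 2*π*‖f z‖ := by
      rw [norm_smul, Real.norm_eq_abs, abs_of_pos Real.two_pi_pos]
    calc 2*π*‖f z‖ = ‖∫ θ in (0:ℝ)..(2*π), f (circleMap z s θ)‖ := by
          rw [circle_mean hU hf hs hsub, h1]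
      _ ≤ ∫ θ in (0:ℝ)..(2*π), g θ :=
          intervalIntegral.norm_integral_le_integral_norm (by positivity)
  -- step 1' : in ENNReal form
  have hIoo : (volume.restrict (Ioo (-π) π)) = volume.restrict (Ioc (-π) π) :=
    Measure.restrict_congr_set Ioo_ae_eq_Ioc
  set A := ∫⁻ θ in Ioo (-π) π, ENNReal.ofReal (g θ) with hA
  set B := ∫⁻ θ in Ioo (-π) π, ENNReal.ofReal (g θ^2) with hB
  have hA1 : ENNReal.ofReal (2*π*‖f z‖) ≤ A := by
    refine le_trans (ENNReal.ofReal_le_ofReal step1) ?_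
    rw [intervalIntegral.integral_of_le (by linarith [Real.pi_pos] : -π ≤ π)]
    rw [ofReal_integral_eq_lintegral_ofReal (hgc.integrableOn_Ioc)
      (Filter.Eventually.of_forall hgnn)]
    rw [hA, hIoo]
  -- step 2 : Cauchy-Schwarz
  have hmeas : AEMeasurable (fun θ => ENNReal.ofReal (g θ))
      (volume.restrict (Ioo (-π) π)) :=
    (ENNReal.measurable_ofReal.comp hgc.measurable).aemeasurable
  have hCS := ENNReal.lintegral_mul_le_Lp_mul_Lq (volume.restrict (Ioo (-π) π))
    (Real.holderConjugate_iff_eq_conjExponent (by norm_num) |>.mpr (by norm_num) :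
      Real.HolderConjugate 2 2)
    hmeas aemeasurable_const (g := fun _ => (1:ℝ≥0∞))
  simp only [mul_one, Pi.mul_apply, ENNReal.one_rpow, lintegral_const,
    Measure.restrict_apply MeasurableSet.univ, Set.univ_inter, one_mul] at hCS
  have hvol : volume (Ioo (-π) π) = ENNReal.ofReal (2*π) := by
    rw [Real.volume_Ioo]
    congr 1
    ring
  have hpow : ∀ θ, ENNReal.ofReal (g θ) ^ (2:ℝ) = ENNReal.ofReal (g θ ^ 2) := by
    intro θ
    rw [show ((2:ℝ)) = ((2:ℕ):ℝ) by norm_num, ENNReal.rpow_natCast,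
      ENNReal.ofReal_pow (hgnn θ)]
  rw [hvol] at hCS
  simp only [hpow] at hCS
  have hA2 : A ≤ B ^ (1/2:ℝ) * ENNReal.ofReal (2*π) ^ (1/2:ℝ) := hCS
  -- combine
  have key : ENNReal.ofReal (2*π*‖f z‖^2) * ENNReal.ofReal (2*π)
      ≤ B * ENNReal.ofReal (2*π) := by
    have hsq : ENNReal.ofReal (2*π*‖f z‖) * ENNReal.ofReal (2*π*‖f z‖)
        ≤ (B ^ (1/2:ℝ) * ENNReal.ofReal (2*π) ^ (1/2:ℝ))
          * (B ^ (1/2:ℝ) * ENNReal.ofReal (2*π) ^ (1/2:ℝ)) :=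
      mul_le_mul' (hA1.trans hA2) (hA1.trans hA2)
    have hrw : (B ^ (1/2:ℝ) * ENNReal.ofReal (2*π) ^ (1/2:ℝ))
        * (B ^ (1/2:ℝ) * ENNReal.ofReal (2*π) ^ (1/2:ℝ)) = B * ENNReal.ofReal (2*π) := by
      have hself : ∀ x : ℝ≥0∞, x ^ (1/2:ℝ) * x ^ (1/2:ℝ) = x := fun x => by
        rw [← ENNReal.rpow_add_of_nonneg (1/2) (1/2) (by norm_num) (by norm_num)]
        norm_num
      rw [mul_mul_mul_comm, hself, hself]
    rw [hrw] at hsq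
    refine le_trans (le_of_eq ?_) hsq
    rw [← ENNReal.ofReal_mul (by positivity), ← ENNReal.ofReal_mul (by positivity)]
    congr 1
    ring
  exact (ENNReal.mul_le_mul_iff_left (by positivity)
    (ENNReal.ofReal_ne_top)).mp key

lemma mvp {f : ℂ → ℂ} (hfm : Measurable f) {U : Set ℂ} (hU : IsOpen U)
    (hf : DifferentiableOn ℂ f U) {z : ℂ} {ρ : ℝ} (hρ : 0 < ρ)
    (hsub : closedBall z ρ ⊆ U) :
    ENNReal.ofReal (π * ρ^2 * ‖f z‖^2) ≤ ∫⁻ w in ball z ρ, ENNReal.ofReal (‖f w‖^2) := by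
  set G : ℂ → ℝ≥0∞ := fun w => (ball z ρ).indicator (fun w => ENNReal.ofReal (‖f w‖^2)) w
    with hG
  have h1 : ∫⁻ w in ball z ρ, ENNReal.ofReal (‖f w‖^2) = ∫⁻ w, G w :=
    (lintegral_indicator measurableSet_ball _).symm
  have h2 : ∫⁻ w, G w = ∫⁻ w, G (z + w) := (lintegral_add_left_eq_self G z).symm
  rw [h1, h2, lintegral_polar_complex (fun w => G (z + w))]
  have hcm : Continuous fun p : ℝ × ℝ => circleMap z p.1 p.2 := by
    simp only [circleMap]
    fun_prop
  have hmeasF : Measurable fun p : ℝ × ℝ =>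
      ENNReal.ofReal p.1 * ENNReal.ofReal (‖f (circleMap z p.1 p.2)‖^2) :=
    (ENNReal.measurable_ofReal.comp measurable_fst).mul
      (ENNReal.measurable_ofReal.comp ((hfm.comp hcm.measurable).norm.pow_const 2))
  have hpolar_eq : ∀ p : ℝ × ℝ, z + Complex.polarCoord.symm p = circleMap z p.1 p.2 := by
    intro p
    simp only [Complex.polarCoord_symm_apply, circleMap, Complex.exp_mul_I]
    push_cast
    ring
  have hcongr : ∫⁻ p in Ioo (0:ℝ) ρ ×ˢ Ioo (-π) π,
        ENNReal.ofReal p.1 * G (z + Complex.polarCoord.symm p)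
      = ∫⁻ p in Ioo (0:ℝ) ρ ×ˢ Ioo (-π) π,
        ENNReal.ofReal p.1 * ENNReal.ofReal (‖f (circleMap z p.1 p.2)‖^2) := by
    apply setLIntegral_congr_fun (measurableSet_Ioo.prod measurableSet_Ioo)
    intro p hp
    have hmem : z + Complex.polarCoord.symm p ∈ ball z ρ := by
      rw [mem_ball, dist_eq_norm]
      have : ‖Complex.polarCoord.symm p‖ = |p.1| := by
        rw [Complex.norm_polarCoord_symm]
      simp only [add_sub_cancel_left]
      rw [this, abs_of_pos hp.1.1]
      exact hp.1.2
    rw [hG]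
    simp only [indicator_of_mem hmem]
    rw [hpolar_eq]
  calc ENNReal.ofReal (π * ρ^2 * ‖f z‖^2)
      = ∫⁻ s in Ioo (0:ℝ) ρ, ENNReal.ofReal s * ENNReal.ofReal (2*π*‖f z‖^2) := by
        rw [lintegral_mul_const' _ _ ENNReal.ofReal_ne_top]
        have hint : ∫⁻ s in Ioo (0:ℝ) ρ, ENNReal.ofReal s = ENNReal.ofReal (ρ^2/2) := by
          have hi : IntegrableOn (fun s : ℝ => s) (Ioc 0 ρ) := continuous_id.integrableOn_Ioc
          rw [Measure.restrict_congr_set Ioo_ae_eq_Ioc,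
            ← ofReal_integral_eq_lintegral_ofReal hi
              ((ae_restrict_iff' measurableSet_Ioc).2 (Eventually.of_forall fun x hx => hx.1.le))]
          rw [← intervalIntegral.integral_of_le hρ.le]
          norm_num [integral_id]
        rw [hint, ← ENNReal.ofReal_mul (by positivity)]
        congr 1
        ring
    _ ≤ ∫⁻ s in Ioo (0:ℝ) ρ, ∫⁻ θ in Ioo (-π) π,
          ENNReal.ofReal s * ENNReal.ofReal (‖f (circleMap z s θ)‖^2) := by
        apply lintegral_mono_ae
        filter_upwards [ae_restrict_mem measurableSet_Ioo] with s hs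
        rw [lintegral_const_mul' _ _ ENNReal.ofReal_ne_top]
        refine mul_le_mul_right (circle_sq_bound hU hf hs.1 ?_) _
        exact (closedBall_subset_closedBall hs.2.le).trans hsub
    _ = ∫⁻ p in Ioo (0:ℝ) ρ ×ˢ Ioo (-π) π,
          ENNReal.ofReal p.1 * ENNReal.ofReal (‖f (circleMap z p.1 p.2)‖^2) := by
        have hre : (volume : Measure (ℝ×ℝ)).restrict (Ioo (0:ℝ) ρ ×ˢ Ioo (-π) π)
            = (volume.restrict (Ioo (0:ℝ) ρ)).prod (volume.restrict (Ioo (-π) π)) := by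
          rw [Measure.prod_restrict, ← Measure.volume_eq_prod ℝ ℝ]
        rw [hre, lintegral_prod _ hmeasF.aemeasurable]
    _ = ∫⁻ p in Ioo (0:ℝ) ρ ×ˢ Ioo (-π) π,
          ENNReal.ofReal p.1 * G (z + Complex.polarCoord.symm p) := hcongr.symm
    _ ≤ ∫⁻ p in Ioi (0:ℝ) ×ˢ Ioo (-π) π,
          ENNReal.ofReal p.1 * G (z + Complex.polarCoord.symm p) :=
        lintegral_mono_set (prod_mono_left Ioo_subset_Ioi_self)

/-- Every holomorphic function on the punctured unit disk with finite Dirichlet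
energy extends holomorphically to the whole disk. -/
theorem punctured_disk_dirichlet_removable
    (h : ℂ → ℂ)
    (hh : DifferentiableOn ℂ h (ball (0 : ℂ) 1 \ {0}))
    (hint : IntegrableOn (fun z => ‖deriv h z‖ ^ 2) (ball (0 : ℂ) 1 \ {0})) :
    ∃ g : ℂ → ℂ, DifferentiableOn ℂ g (ball (0 : ℂ) 1) ∧
      Set.EqOn g h (ball (0 : ℂ) 1 \ {0}) := by
  have hUo : IsOpen (ball (0 : ℂ) 1 \ {0}) := isOpen_ball.sdiff isClosed_singleton
  have hfd : DifferentiableOn ℂ (deriv h) (ball (0 : ℂ) 1 \ {0}) :=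
    ((hh.analyticOnNhd hUo).deriv).differentiableOn
  have hfm : Measurable (deriv h) := measurable_deriv h
  -- the energy measure
  set ν : Measure ℂ := (volume.restrict (ball (0 : ℂ) 1 \ {0})).withDensity
    (fun w => ENNReal.ofReal (‖deriv h w‖^2)) with hν
  have hνle : ∀ s : Set ℂ, MeasurableSet s →
      ν s = ∫⁻ w in s ∩ (ball (0 : ℂ) 1 \ {0}), ENNReal.ofReal (‖deriv h w‖^2) := by
    intro s hs
    rw [hν, withDensity_apply _ hs, Measure.restrict_restrict hs]
  have hνfin : ν Set.univ ≠ ⊤ := by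
    rw [hνle _ MeasurableSet.univ, Set.univ_inter]
    have h2 := hint.2
    rw [hasFiniteIntegral_iff_norm] at h2
    refine ne_of_lt (lt_of_le_of_lt (le_of_eq ?_) h2)
    apply lintegral_congr
    intro w
    congr 1
    rw [norm_of_nonneg (by positivity)]
  have hν0 : ν {0} = 0 := by
    rw [hνle _ (measurableSet_singleton 0)]
    apply setLIntegral_measure_zero
    refine measure_mono_null (Set.inter_subset_left) (measure_singleton 0)
  have hcth : Tendsto (fun r => ν (cthickening r {0})) (𝓝 0) (𝓝 0) := by
    have := tendsto_measure_cthickening_of_isClosed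
      (μ := ν) (s := ({0} : Set ℂ)) ⟨1, one_pos, ne_top_of_le_ne_top hνfin (measure_mono (subset_univ _))⟩
      isClosed_singleton
    rwa [hν0] at this
  -- key : z * deriv h z → 0
  have hkey : Tendsto (fun z : ℂ => z * deriv h z) (𝓝[≠] (0:ℂ)) (𝓝 0) := by
    rw [Metric.tendsto_nhdsWithin_nhds]
    intro ε hε
    have hpos : (0:ℝ≥0∞) < ENNReal.ofReal (π * ε^2/16) :=
      ENNReal.ofReal_pos.2 (by positivity)
    have hev : ∀ᶠ r in 𝓝 (0:ℝ), ν (cthickening r {0}) < ENNReal.ofReal (π * ε^2/16) :=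
      hcth.eventually_lt_const hpos
    obtain ⟨δν, hδν, hδsmall⟩ := Metric.eventually_nhds_iff.1 hev
    refine ⟨min (2*δν/3) (2/3), by positivity, ?_⟩
    intro z hzne hdist
    have hzne' : z ≠ 0 := hzne
    have hz0 : 0 < ‖z‖ := norm_pos_iff.2 hzne'
    rw [dist_zero_right] at hdist
    have h23 : ‖z‖ < 2/3 := lt_of_lt_of_le hdist (min_le_right _ _)
    have hzδ : ‖z‖ < 2*δν/3 := lt_of_lt_of_le hdist (min_le_left _ _)
    set ρ := ‖z‖/2 with hρdef
    have hρ : 0 < ρ := by positivity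
    have hsubU : closedBall z ρ ⊆ ball (0:ℂ) 1 \ {0} := by
      intro w hw
      rw [mem_closedBall, dist_eq_norm] at hw
      constructor
      · rw [mem_ball, dist_zero_right]
        calc ‖w‖ ≤ ‖w - z‖ + ‖z‖ := by simpa using norm_add_le (w - z) z
          _ ≤ ρ + ‖z‖ := by linarith
          _ < 1 := by rw [hρdef]; linarith
      · simp only [mem_singleton_iff]
        intro hw0
        rw [hw0, zero_sub, norm_neg] at hw
        rw [hρdef] at hw
        linarith
    have hmvp := mvp hfm hUo hfd hρ hsubU
    have hballν : ∫⁻ w in ball z ρ, ENNReal.ofReal (‖deriv h w‖^2)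
        ≤ ν (cthickening (3*‖z‖/2) {0}) := by
      rw [Metric.cthickening_singleton _ (by positivity),
        hνle _ measurableSet_closedBall]
      apply lintegral_mono_set
      intro w hw
      refine ⟨?_, hsubU (ball_subset_closedBall hw)⟩
      rw [mem_ball, dist_eq_norm] at hw
      rw [mem_closedBall, dist_zero_right]
      calc ‖w‖ ≤ ‖w - z‖ + ‖z‖ := by simpa using norm_add_le (w - z) z
        _ ≤ ρ + ‖z‖ := by linarith
        _ ≤ 3*‖z‖/2 := by rw [hρdef]; linarith
    have hsmall : ν (cthickening (3*‖z‖/2) {0}) < ENNReal.ofReal (π * ε^2/16) := by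
      apply hδsmall
      rw [Real.dist_eq, sub_zero, abs_of_pos (by positivity)]
      linarith
    have hlt : π * ρ^2 * ‖deriv h z‖^2 < π * ε^2/16 :=
      (ENNReal.ofReal_lt_ofReal_iff (by positivity)).1
        (lt_of_le_of_lt (hmvp.trans hballν) hsmall)
    rw [dist_zero_right, norm_mul]
    have hsq : (‖z‖ * ‖deriv h z‖)^2 < (ε/2)^2 := by
      rw [hρdef] at hlt
      nlinarith [pi_pos, norm_nonneg (deriv h z), sq_nonneg (‖z‖ * ‖deriv h z‖)]
    have := lt_of_pow_lt_pow_left₀ 2 (by positivity : (0:ℝ) ≤ ε/2) hsq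
    linarith
  -- extend deriv h
  have hball : ball (0:ℂ) 1 ∈ 𝓝 (0:ℂ) := ball_mem_nhds _ one_pos
  have ho : (fun z => deriv h z - deriv h 0) =o[𝓝[≠] (0:ℂ)] fun z => (z - 0)⁻¹ := by
    rw [Asymptotics.isLittleO_iff_tendsto' ?ne]
    case ne =>
      filter_upwards [self_mem_nhdsWithin] with z hz hc
      exact absurd (inv_eq_zero.1 hc) (by simpa using hz)
    have heq : (fun z : ℂ => (deriv h z - deriv h 0) / (z - 0)⁻¹)
        = fun z => z * deriv h z - z * deriv h 0 := by
      funext z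
      rw [sub_zero, div_eq_mul_inv, inv_inv]
      ring
    rw [heq]
    have h2 : Tendsto (fun z : ℂ => z * deriv h 0) (𝓝[≠] (0:ℂ)) (𝓝 0) := by
      have : Tendsto (fun z : ℂ => z * deriv h 0) (𝓝 (0:ℂ)) (𝓝 (0 * deriv h 0)) :=
        (continuous_id.mul continuous_const).tendsto 0
      simpa using this.mono_left nhdsWithin_le_nhds
    simpa using hkey.sub h2
  have hF := Complex.differentiableOn_update_limUnder_of_isLittleO hball hfd ho
  set F := Function.update (deriv h) 0 (limUnder (𝓝[≠] (0:ℂ)) (deriv h)) with hFdef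
  have hFc : ContinuousAt F 0 := (hF.differentiableAt hball).continuousAt
  -- bound on deriv h near 0
  obtain ⟨δ₀, hδ₀pos, hδ₀⟩ := Metric.continuousAt_iff.1 hFc 1 one_pos
  set M := ‖F 0‖ + 1 with hMdef
  have hM0 : 0 < M := by positivity
  set δ₁ := min (δ₀/2) (1/2) with hδ₁def
  have hδ₁pos : 0 < δ₁ := by positivity
  have hδ₁lt1 : δ₁ < 1 := lt_of_le_of_lt (min_le_right _ _) (by norm_num)
  have hbnd : ∀ w ∈ ball (0:ℂ) δ₁, ‖F w‖ ≤ M := by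
    intro w hw
    rw [mem_ball, ] at hw
    have : dist w 0 < δ₀ := lt_of_lt_of_le (lt_of_lt_of_le hw (min_le_left _ _)) (by linarith)
    have := hδ₀ this
    rw [dist_eq_norm] at this
    calc ‖F w‖ ≤ ‖F w - F 0‖ + ‖F 0‖ := by simpa using norm_add_le (F w - F 0) (F 0)
      _ ≤ 1 + ‖F 0‖ := by linarith
      _ = M := by rw [hMdef]; ring
  have hderiv_bound : ∀ w : ℂ, w ∈ ball (0:ℂ) δ₁ → w ≠ 0 → ‖deriv h w‖ ≤ M := by
    intro w hw hw0
    have : F w = deriv h w := Function.update_of_ne hw0 _ _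
    rw [← this]
    exact hbnd w hw
  -- h is bounded near 0
  set δ₂ := δ₁/2 with hδ₂def
  have hδ₂pos : 0 < δ₂ := by positivity
  have hsph : sphere (0:ℂ) δ₂ ⊆ ball (0:ℂ) 1 \ {0} := by
    intro w hw
    rw [mem_sphere, dist_zero_right] at hw
    constructor
    · rw [mem_ball, dist_zero_right, hw]; linarith
    · simp only [mem_singleton_iff]
      intro hw0
      rw [hw0, norm_zero] at hw
      linarith
  obtain ⟨C, hC⟩ := (isCompact_sphere (0:ℂ) δ₂).exists_bound_of_continuousOn
    (hh.continuousOn.mono hsph)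
  have hhbdd : ∀ z : ℂ, z ∈ ball (0:ℂ) δ₂ → z ≠ 0 → ‖h z‖ ≤ C + M * δ₁ := by
    intro z hz hz0
    rw [mem_ball, dist_zero_right] at hz
    have hz0' : 0 < ‖z‖ := norm_pos_iff.2 hz0
    set c : ℝ := δ₂/‖z‖ with hcdef
    have hc1 : 1 < c := (one_lt_div hz0').2 hz
    set z' : ℂ := (c : ℝ) • z with hz'def
    have hz'n : ‖z'‖ = δ₂ := by
      rw [hz'def, norm_smul, Real.norm_eq_abs, abs_of_pos (by positivity), hcdef,
        div_mul_cancel₀ _ (ne_of_gt hz0')]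
    have hmem : ∀ x ∈ segment ℝ z z', ‖z‖ ≤ ‖x‖ ∧ ‖x‖ ≤ δ₂ := by
      intro x hx
      rw [segment_eq_image] at hx
      obtain ⟨t, ht, hxt⟩ := hx
      have hxeq : x = ((1 - t) + t * c : ℝ) • z := by
        rw [← hxt, hz'def]
        simp only [smul_smul, ← add_smul]
      have hco1 : 1 ≤ (1 - t) + t * c := by nlinarith [ht.1, ht.2]
      have hco2 : (1 - t) + t * c ≤ c := by nlinarith [ht.1, ht.2]
      rw [hxeq, norm_smul, Real.norm_eq_abs, abs_of_pos (by linarith)]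
      constructor
      · nlinarith
      · calc ((1 - t) + t * c) * ‖z‖ ≤ c * ‖z‖ := by nlinarith
          _ = δ₂ := by rw [hcdef, div_mul_cancel₀ _ (ne_of_gt hz0')]
    have hsegU : ∀ x ∈ segment ℝ z z', x ∈ ball (0:ℂ) 1 \ {0} := by
      intro x hx
      obtain ⟨hx1, hx2⟩ := hmem x hx
      constructor
      · rw [mem_ball, dist_zero_right]
        calc ‖x‖ ≤ δ₂ := hx2
          _ < 1 := by rw [hδ₂def]; linarith
      · simp only [mem_singleton_iff]
        intro hx0
        rw [hx0, norm_zero] at hx1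
        linarith
    have hmvt := Convex.norm_image_sub_le_of_norm_hasDerivWithin_le
      (f := h) (f' := deriv h) (s := segment ℝ z z')
      (fun x hx => ((hh.differentiableAt (hUo.mem_nhds (hsegU x hx))).hasDerivAt).hasDerivWithinAt)
      (fun x hx => by
        obtain ⟨hx1, hx2⟩ := hmem x hx
        refine hderiv_bound x ?_ ?_
        · rw [mem_ball, dist_zero_right]
          calc ‖x‖ ≤ δ₂ := hx2
            _ < δ₁ := by rw [hδ₂def]; linarith
        · intro hx0
          rw [hx0, norm_zero] at hx1
          linarith)
      (convex_segment z z') (left_mem_segment ℝ z z') (right_mem_segment ℝ z z')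
    -- hmvt : ‖h z' - h z‖ ≤ M * ‖z' - z‖
    have hzz' : ‖z' - z‖ ≤ δ₁ := by
      have hd : z' - z = ((c - 1 : ℝ)) • z := by rw [hz'def, sub_smul, one_smul]
      rw [hd, norm_smul, Real.norm_eq_abs, abs_of_pos (by linarith)]
      have hcz : (c - 1) * ‖z‖ = δ₂ - ‖z‖ := by
        rw [hcdef, sub_mul, div_mul_cancel₀ _ (ne_of_gt hz0'), one_mul]
      rw [hcz, hδ₂def]
      linarith
    calc ‖h z‖ ≤ ‖h z'‖ + ‖h z' - h z‖ := by
          simpa using norm_sub_le (h z') (h z' - h z)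
      _ ≤ C + M * δ₁ := by
          have h1 : ‖h z'‖ ≤ C := hC z' (by rw [mem_sphere, dist_zero_right]; exact hz'n)
          have h2 : ‖h z' - h z‖ ≤ M * δ₁ :=
            le_trans hmvt (mul_le_mul_of_nonneg_left hzz' hM0.le)
          linarith
  -- conclude : h is bounded on punctured nbhd, apply removable singularity
  have hbU : IsBoundedUnder (· ≤ ·) (𝓝[≠] (0:ℂ)) (norm ∘ (fun z => h z - h 0)) := by
    refine ⟨C + M * δ₁ + ‖h 0‖, ?_⟩
    rw [eventually_map]
    have hmem : ball (0:ℂ) δ₂ \ {0} ∈ 𝓝[≠] (0:ℂ) :=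
      diff_mem_nhdsWithin_compl (ball_mem_nhds _ hδ₂pos) {0}
    filter_upwards [hmem] with z hz
    have := hhbdd z hz.1 (by simpa using hz.2)
    calc ‖h z - h 0‖ ≤ ‖h z‖ + ‖h 0‖ := norm_sub_le _ _
      _ ≤ C + M * δ₁ + ‖h 0‖ := by linarith
  have ho2 : (fun z => h z - h 0) =o[𝓝[≠] (0:ℂ)] fun z => (z - 0)⁻¹ :=
    hbU.isLittleO_sub_self_inv
  have hG := Complex.differentiableOn_update_limUnder_of_isLittleO hball hh ho2
  exact ⟨Function.update h 0 (limUnder (𝓝[≠] (0:ℂ)) h), hG,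
    fun z hz => Function.update_of_ne (by simpa using hz.2) _ _⟩
end
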